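/- Let n ≥ 1 and let R be a commutative ring. Let D be a finite type of arcs on the vertex set {0,1,…,n} with source map s_D, target map t_D and weight map w_D satisfying t_D(e) ≠ 0 and s_D(e) ≠ t_D(e) for all e. Let a, b, c ∈ {0,1,…,n} with b ≠ 0, a ≠ b, c ≠ b, and let ω ∈ R. Let Γ be the weighted matrix digraph whose arcs are D together with one extra arc e from a to b of weight ω, and let Γ' be the weighted matrix digraph whose arcs are D together with one extra arc e' from c to b of weight ω. Suppose that a and b are not strongly connected in Γ (i.e. it is not the case that both a directed path from a to b and a directed path from b to a exist among the arcs of Γ) and that c and b are not strongly connected in Γ'. Then the sum of arborescence weights of Γ equals the sum of arborescence weights of Γ': Σ_{S arborescence of Γ} ∏_{f∈S} w(f) = Σ_{S' arborescence of Γ'} ∏_{f∈S'} w(f). -/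

import Mathlib

attribute [local instance] Classical.propDecidable

/-- A directed path within the arc set `S` from `u` to `v`: a nonempty list of arcs `e₁,…,e_r`
of `S` with `s e₁ = u`, `t eₖ = s eₖ₊₁` for `k < r`, and `t e_r = v`. -/
def HasPathIn {V E : Type*} (s t : E → V) (S : Finset E) (u v : V) : Prop :=
  ∃ (l : List E) (hl : l ≠ []), (∀ e ∈ l, e ∈ S) ∧
    List.Chain' (fun e f => t e = s f) l ∧ s (l.head hl) = u ∧ t (l.getLast hl) = v

/-- A directed cycle within the arc set `S`: a nonempty list of arcs `e₁,…,e_r` of `S` with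
`t eₖ = s eₖ₊₁` for `k < r` and `t e_r = s e₁`. -/
def HasCycleIn {V E : Type*} (s t : E → V) (S : Finset E) : Prop :=
  ∃ (l : List E) (hl : l ≠ []), (∀ e ∈ l, e ∈ S) ∧
    List.Chain' (fun e f => t e = s f) l ∧ t (l.getLast hl) = s (l.head hl)

/-- An arborescence of the matrix digraph on vertices `{0,…,n}`: a set `S` of `n` arcs such
that every vertex `i ∈ {1,…,n}` is the target of exactly one arc of `S` and `S` contains no
directed cycle. -/
def IsArbor {E : Type*} (n : ℕ) (s t : E → Fin (n + 1)) (S : Finset E) : Prop :=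
  S.card = n ∧ (∀ i : Fin (n + 1), i ≠ 0 → ∃! e, e ∈ S ∧ t e = i) ∧ ¬ HasCycleIn s t S

/-- Vertices `u` and `v` are strongly connected in the digraph with arcs `E`: there is a
directed path from `u` to `v` and one from `v` to `u` among all arcs. -/
def StronglyConnectedIn {V E : Type*} [Fintype E] (s t : E → V) (u v : V) : Prop :=
  HasPathIn s t Finset.univ u v ∧ HasPathIn s t Finset.univ v u

/-- Build a path from option-valued head/last data. -/
lemma hasPathIn_of_head?_getLast? {V E : Type*} (s t : E → V) (S : Finset E) {u v : V}
    {l : List E} (hl : l ≠ []) (hS : ∀ e ∈ l, e ∈ S)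
    (hc : List.Chain' (fun e f => t e = s f) l)
    (hx : ∀ x ∈ l.head?, s x = u) (hy : ∀ y ∈ l.getLast?, t y = v) :
    HasPathIn s t S u v := by
  refine ⟨l, hl, hS, hc, ?_, ?_⟩
  · exact hx _ (List.head?_eq_head hl ▸ rfl)
  · exact hy _ (List.getLast?_eq_getLast hl ▸ rfl)

/-- Rotating a cycle at an arc `x` gives a directed path from `t x` to `s x`. -/
lemma path_of_mem_cycle {V E : Type*} (s t : E → V) (S : Finset E)
    {l : List E} (hl : l ≠ []) (hS : ∀ e ∈ l, e ∈ S)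
    (hc : List.Chain' (fun e f => t e = s f) l)
    (hcyc : t (l.getLast hl) = s (l.head hl))
    {x : E} (hx : x ∈ l) : HasPathIn s t S (t x) (s x) := by
  obtain ⟨l₁, l₂, rfl⟩ := List.append_of_mem hx
  have hcyc' : ∀ u ∈ (l₁ ++ x :: l₂).getLast?, ∀ v ∈ (l₁ ++ x :: l₂).head?, t u = s v := by
    intro u hu v hv
    rw [List.getLast?_eq_getLast hl, Option.mem_some_iff] at hu
    rw [List.head?_eq_head hl, Option.mem_some_iff] at hv
    subst hu; subst hv; exact hcyc
  rw [List.Chain', List.isChain_append, List.isChain_cons] at hc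
  obtain ⟨hc₁, ⟨hlink₂, hc₂⟩, hlink₁⟩ := hc
  match l₁, l₂ with
  | [], [] =>
      have h : t x = s x := hcyc' x (by simp) x (by simp)
      exact ⟨[x], by simp, by simpa using hS x (by simp), List.isChain_singleton _, by simp [h],
        by simpa using h⟩
  | [], y :: l₂ =>
      refine hasPathIn_of_head?_getLast? s t S (l := y :: l₂) (by simp)
        (fun e he => hS e (by
          simp only [List.nil_append, List.mem_cons] at he ⊢; tauto)) hc₂ ?_ ?_
      · intro z hz
        simp only [List.head?_cons, Option.mem_some_iff] at hz
        subst hz; exact (hlink₂ _ rfl).symm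
      · intro z hz
        exact hcyc' z (by simpa using hz) x (by simp)
  | z :: l₁, [] =>
      refine hasPathIn_of_head?_getLast? s t S (l := z :: l₁) (by simp)
        (fun e he => hS e (by
          simp only [List.cons_append, List.mem_cons, List.mem_append] at he ⊢; tauto))
        hc₁ ?_ ?_
      · intro w hw
        refine (hcyc' x ?_ w ?_).symm
        · rw [Option.mem_def]; exact List.getLast?_concat
        · simpa using hw
      · intro w hw
        exact hlink₁ w hw x rfl
  | z :: l₁, y :: l₂ =>
      have hchain : List.Chain' (fun e f => t e = s f) ((y :: l₂) ++ (z :: l₁)) := by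
        rw [List.Chain', List.isChain_append]
        refine ⟨hc₂, hc₁, ?_⟩
        intro u hu v hv
        simp only [List.head?_cons, Option.mem_some_iff] at hv
        subst hv
        refine hcyc' u ?_ _ (by simp)
        rw [List.getLast?_append_cons, List.getLast?_cons_cons]
        exact hu
      refine hasPathIn_of_head?_getLast? s t S (l := (y :: l₂) ++ (z :: l₁)) (by simp)
        (fun e he => hS e (by
          simp only [List.mem_append, List.mem_cons, List.cons_append] at he ⊢; tauto))
        hchain ?_ ?_
      · intro w hw
        simp only [List.cons_append, List.head?_cons, Option.mem_some_iff] at hw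
        subst hw; exact (hlink₂ _ rfl).symm
      · intro w hw
        rw [List.getLast?_append_cons] at hw
        exact hlink₁ w hw x rfl

/-- If `S` has a cycle with respect to source map `s₂`, then either it has a cycle with respect
to `s₁` (agreeing with `s₂` on `inl`) or there is a path from `b` to `c` w.r.t. `s₂`. -/
lemma cycle_transfer {D : Type*} {V : Type*} (sD tD : D → V) (a c b : V)
    (S : Finset (D ⊕ Unit))
    (h : HasCycleIn (Sum.elim sD fun _ => c) (Sum.elim tD fun _ => b) S) :
    HasCycleIn (Sum.elim sD fun _ => a) (Sum.elim tD fun _ => b) S ∨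
    ∀ (T : Finset (D ⊕ Unit)), (∀ e ∈ S, e ∈ T) →
      HasPathIn (Sum.elim sD fun _ => c) (Sum.elim tD fun _ => b) T b c := by
  obtain ⟨l, hl, hS, hc, hcyc⟩ := h
  rcases Classical.em (Sum.inr () ∈ l) with hx | hx
  · right
    intro T hT
    have := path_of_mem_cycle (Sum.elim sD fun _ => c) (Sum.elim tD fun _ => b) T hl
      (fun e he => hT e (hS e he)) hc hcyc hx
    simpa using this
  · left
    have hsrc : ∀ e ∈ l, (Sum.elim sD fun _ : Unit => a) e = (Sum.elim sD fun _ : Unit => c) e := by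
      intro e he
      match e with
      | Sum.inl d => rfl
      | Sum.inr () => exact absurd he hx
    refine ⟨l, hl, hS, ?_, ?_⟩
    · rw [List.Chain', List.IsChain.iff_mem] at hc ⊢
      refine hc.imp ?_
      rintro e f ⟨he, hf, hef⟩
      exact ⟨he, hf, by rw [hsrc f hf]; exact hef⟩
    · rw [hsrc _ (List.head_mem hl)]; exact hcyc

theorem sum_arborescence_weights_eq_of_moved_arc
    (n : ℕ) (hn : 1 ≤ n) (R : Type*) [CommRing R]
    (D : Type*) [Fintype D] [DecidableEq D]
    (sD tD : D → Fin (n + 1)) (wD : D → R)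
    (htD : ∀ e, tD e ≠ 0) (hsD : ∀ e, sD e ≠ tD e)
    (a b c : Fin (n + 1)) (hb : b ≠ 0) (hab : a ≠ b) (hcb : c ≠ b) (ω : R)
    (hΓ : ¬ StronglyConnectedIn (Sum.elim sD fun _ : Unit => a)
            (Sum.elim tD fun _ : Unit => b) a b)
    (hΓ' : ¬ StronglyConnectedIn (Sum.elim sD fun _ : Unit => c)
            (Sum.elim tD fun _ : Unit => b) c b) :
    (∑ S ∈ Finset.univ.filter
        (IsArbor n (Sum.elim sD fun _ : Unit => a) (Sum.elim tD fun _ : Unit => b)),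
      ∏ e ∈ S, Sum.elim wD (fun _ : Unit => ω) e)
    = ∑ S ∈ Finset.univ.filter
        (IsArbor n (Sum.elim sD fun _ : Unit => c) (Sum.elim tD fun _ : Unit => b)),
      ∏ e ∈ S, Sum.elim wD (fun _ : Unit => ω) e := by
  -- the single-arc path `a → b` in Γ and `c → b` in Γ'
  have patha : HasPathIn (Sum.elim sD fun _ : Unit => a) (Sum.elim tD fun _ : Unit => b)
      Finset.univ a b :=
    ⟨[Sum.inr ()], by simp, by simp, List.isChain_singleton _, by simp, by simp⟩
  have pathc : HasPathIn (Sum.elim sD fun _ : Unit => c) (Sum.elim tD fun _ : Unit => b)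
      Finset.univ c b :=
    ⟨[Sum.inr ()], by simp, by simp, List.isChain_singleton _, by simp, by simp⟩
  have key : ∀ S : Finset (D ⊕ Unit),
      HasCycleIn (Sum.elim sD fun _ : Unit => a) (Sum.elim tD fun _ : Unit => b) S ↔
      HasCycleIn (Sum.elim sD fun _ : Unit => c) (Sum.elim tD fun _ : Unit => b) S := by
    intro S
    constructor
    · intro h
      rcases cycle_transfer sD tD c a b S h with h' | h'
      · exact h'
      · exact absurd ⟨patha, h' Finset.univ (fun e _ => Finset.mem_univ e)⟩ hΓ
    · intro h
      rcases cycle_transfer sD tD a c b S h with h' | h'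
      · exact h'
      · exact absurd ⟨pathc, h' Finset.univ (fun e _ => Finset.mem_univ e)⟩ hΓ'
  have hfilter : Finset.univ.filter
        (IsArbor n (Sum.elim sD fun _ : Unit => a) (Sum.elim tD fun _ : Unit => b))
      = Finset.univ.filter
        (IsArbor n (Sum.elim sD fun _ : Unit => c) (Sum.elim tD fun _ : Unit => b)) := by
    apply Finset.filter_congr
    intro S _
    unfold IsArbor
    rw [key S]
  rw [hfilter]
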